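/- arXiv:math/0501077 — 2 statements merged into one kernel-verified Lean document; each statement's English description precedes it below -/
import Mathlib

section
/- Let X be a compact metric space, r : X → X a continuous, surjective, finite-to-one map, and W : X → [0,∞) a measurable function with R_W 1 = 1. If h is a bounded measurable function with R_W h = h, then for every x ∈ X the limit V((z_n)_{n≥1}) := lim_{n→∞} h(z_n) exists for P_x-almost every path (z_n)_{n≥1} starting at x, the function V so defined is a cocycle, and h(x) = ∫_{Ω_x} V dP_x for every x ∈ X. -/
open MeasureTheory Filter Topology

/-- A path starting at `x`: a sequence `z 0, z 1, z 2, …` (representing `z_1, z_2, …`)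
with `r (z 0) = x` and `r (z (n+1)) = z n`. -/
def IsPathFrom {X : Type*} (r : X → X) (x : X) (z : ℕ → X) : Prop :=
  r (z 0) = x ∧ ∀ n, r (z (n + 1)) = z n

/-- The cylinder of paths starting at `x` whose first `n` entries agree with `z`. -/
def pathCylinder {X : Type*} (r : X → X) (x : X) (z : ℕ → X) (n : ℕ) : Set (ℕ → X) :=
  {w | IsPathFrom r x w ∧ ∀ i < n, w i = z i}

/-- The Ruelle transfer operator `R_W f (x) = ∑_{y ∈ r⁻¹(x)} W(y) f(y)`. -/
noncomputable def RuelleOp {X : Type*} (r : X → X) (W : X → ℝ) (f : X → ℝ) (x : X) : ℝ :=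
  ∑ᶠ y ∈ r ⁻¹' {x}, W y * f y

section Aux

variable {X : Type*}

/-- Canonical extension of the first `m` coordinates of `z` to an infinite sequence,
using a section `s` of `r`. -/
noncomputable def extP (s : X → X) (x : X) (z : ℕ → X) (m : ℕ) : ℕ → X :=
  fun i => if i < m then z i else s^[i + 1 - m] (if m = 0 then x else z (m - 1))

lemma extP_lt (s : X → X) (x : X) (z : ℕ → X) (m : ℕ) {i : ℕ} (hi : i < m) :
    extP s x z m i = z i := if_pos hi

lemma extP_congr {s : X → X} {x : X} {z w : ℕ → X} {m : ℕ}
    (hzw : ∀ i < m, z i = w i) : extP s x z m = extP s x w m := by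
  funext i
  unfold extP
  by_cases hi : i < m
  · simp only [if_pos hi, hzw i hi]
  · rcases Nat.eq_zero_or_pos m with hm | hm
    · simp [hi, hm]
    · have h1 : m - 1 < m := by omega
      have h2 : m ≠ 0 := by omega
      simp only [if_neg hi, if_neg h2, hzw _ h1]

lemma extP_isPath {r : X → X} (s : X → X) (hs : ∀ y, r (s y) = y) (x : X) (z : ℕ → X) (m : ℕ)
    (h0 : 0 < m → r (z 0) = x) (hrel : ∀ i, i + 1 < m → r (z (i + 1)) = z i) :
    IsPathFrom r x (extP s x z m) := by
  constructor
  · by_cases hm : 0 < m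
    · rw [extP_lt s x z m hm]; exact h0 hm
    · have hm0 : m = 0 := by omega
      subst hm0
      show r (extP s x z 0 0) = x
      unfold extP
      simp [hs]
  · intro n
    unfold extP
    by_cases h1 : n + 1 < m
    · have h2 : n < m := by omega
      simp only [if_pos h1, if_pos h2]
      exact hrel n h1
    · by_cases h2 : n < m
      · have hm : m = n + 1 := by omega
        have hm0 : m ≠ 0 := by omega
        simp only [if_neg h1, if_pos h2, if_neg hm0]
        have e1 : n + 1 + 1 - m = 1 := by omega
        have e2 : m - 1 = n := by omega
        rw [e1, e2]
        simp [hs]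
      · simp only [if_neg h1, if_neg h2]
        have e1 : n + 1 + 1 - m = (n + 1 - m) + 1 := by omega
        rw [e1, Function.iterate_succ_apply', hs]

/-- The set of canonical representatives of cylinders of depth `m` over `x`. -/
def prefs (r s : X → X) (x : X) (m : ℕ) : Set (ℕ → X) :=
  (fun z => extP s x z m) '' {z | IsPathFrom r x z}

lemma prefs_isPath {r : X → X} {s : X → X} (hs : ∀ y, r (s y) = y) {x : X} {m : ℕ}
    {σ : ℕ → X} (hσ : σ ∈ prefs r s x m) : IsPathFrom r x σ := by
  obtain ⟨z, hz, rfl⟩ := hσ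
  exact extP_isPath s hs x z m (fun _ => hz.1) (fun i _ => hz.2 i)

lemma prefs_extP {r s : X → X} {x : X} {m : ℕ} {σ : ℕ → X} (hσ : σ ∈ prefs r s x m) :
    extP s x σ m = σ := by
  obtain ⟨z, _, rfl⟩ := hσ
  exact extP_congr (fun i hi => extP_lt s x z m hi)

lemma prefs_eq_of_agree {r s : X → X} {x : X} {m : ℕ} {σ σ' : ℕ → X}
    (hσ : σ ∈ prefs r s x m) (hσ' : σ' ∈ prefs r s x m) (hag : ∀ i < m, σ i = σ' i) :
    σ = σ' := by
  rw [← prefs_extP hσ, ← prefs_extP hσ', extP_congr hag]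

/-- The canonical data extracted from a path: its depth-`m` representative, its `m`-th entry,
and the compatibility between them. -/
lemma repr_aux {r : X → X} {s : X → X} (hs : ∀ y, r (s y) = y) {x : X} {z : ℕ → X}
    (hz : IsPathFrom r x z) (m : ℕ) :
    extP s x z m ∈ prefs r s x m ∧ r (z m) = r (extP s x z m m) ∧
      extP s x (Function.update (extP s x z m) m (z m)) (m + 1) = extP s x z (m + 1) := by
  refine ⟨⟨z, hz, rfl⟩, ?_, ?_⟩
  · have hm : extP s x z m m = s (if m = 0 then x else z (m - 1)) := by
      have e1 : m + 1 - m = 1 := by omega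
      simp [extP, e1]
    rw [hm, hs]
    rcases Nat.eq_zero_or_pos m with hm0 | hm0
    · subst hm0; simp [hz.1]
    · have h := hz.2 (m - 1)
      rw [show m - 1 + 1 = m by omega] at h
      rw [if_neg (by omega)]
      exact h
  · apply extP_congr
    intro i hi
    rcases Nat.lt_or_ge i m with h | h
    · rw [Function.update_of_ne (by omega), extP_lt s x z m h]
    · have : i = m := by omega
      subst this
      rw [Function.update_self]

/-- Extending a representative by one admissible coordinate yields a representative. -/
lemma repr_ext {r : X → X} {s : X → X} (hs : ∀ y, r (s y) = y) {x : X} {m : ℕ} {τ : ℕ → X}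
    (hτ : τ ∈ prefs r s x m) {y : X} (hy : r y = r (τ m)) :
    extP s x (Function.update τ m y) (m + 1) ∈ prefs r s x (m + 1) ∧
      (∀ i < m, extP s x (Function.update τ m y) (m + 1) i = τ i) ∧
      extP s x (Function.update τ m y) (m + 1) m = y := by
  have hτp : IsPathFrom r x τ := prefs_isPath hs hτ
  have hτm : r (τ m) = if m = 0 then x else τ (m - 1) := by
    rcases Nat.eq_zero_or_pos m with hm0 | hm0
    · subst hm0; simp [hτp.1]
    · have h := hτp.2 (m - 1)
      rw [show m - 1 + 1 = m by omega] at h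
      rw [if_neg (by omega)]
      exact h
  have hpath : IsPathFrom r x (extP s x (Function.update τ m y) (m + 1)) := by
    apply extP_isPath s hs
    · intro _
      rcases Nat.eq_zero_or_pos m with hm0 | hm0
      · subst hm0
        rw [Function.update_self, hy, hτm]; simp
      · rw [Function.update_of_ne (by omega)]
        exact hτp.1
    · intro i hi
      have hi' : i < m := by omega
      rcases Nat.lt_or_ge (i + 1) m with h | h
      · rw [Function.update_of_ne (by omega), Function.update_of_ne (by omega)]
        exact hτp.2 i
      · have : i + 1 = m := by omega
        subst this
        rw [Function.update_self, Function.update_of_ne (by omega), hy, hτm,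
          if_neg (by omega)]
        exact congrArg τ (by omega)
  have hmem : extP s x (Function.update τ m y) (m + 1) ∈ prefs r s x (m + 1) := by
    refine ⟨extP s x (Function.update τ m y) (m + 1), hpath, ?_⟩
    apply extP_congr
    intro i hi
    exact extP_lt s x (Function.update τ m y) (m + 1) hi
  refine ⟨hmem, ?_, ?_⟩
  · intro i hi
    rw [extP_lt s x _ (m + 1) (by omega), Function.update_of_ne (by omega)]
  · rw [extP_lt s x _ (m + 1) (by omega), Function.update_self]

lemma prefs_finite {r : X → X} (hr_fin : ∀ x : X, (r ⁻¹' {x}).Finite) {s : X → X}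
    (hs : ∀ y, r (s y) = y) (x : X) : ∀ m : ℕ, (prefs r s x m).Finite := by
  intro m
  induction m with
  | zero =>
    apply Set.Finite.subset (Set.finite_singleton (extP s x (fun _ => x) 0))
    rintro σ ⟨z, _, rfl⟩
    exact extP_congr (fun i hi => absurd hi (by omega))
  | succ m IH =>
    apply Set.Finite.subset
      (Set.Finite.biUnion IH (fun τ _ => Set.Finite.biUnion (hr_fin (r (τ m)))
        (fun y _ => Set.finite_singleton (extP s x (Function.update τ m y) (m + 1)))))
    rintro σ hσ
    have hσp : IsPathFrom r x σ := prefs_isPath hs hσ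
    obtain ⟨h1, h2, h3⟩ := repr_aux hs hσp m
    simp only [Set.mem_iUnion, Set.mem_singleton_iff]
    refine ⟨extP s x σ m, h1, σ m, h2, ?_⟩
    rw [h3, prefs_extP hσ]

/-- Splitting a sum over representatives of depth `m+1` as a double sum. -/
lemma sum_prefs_succ {r : X → X} (hr_fin : ∀ x : X, (r ⁻¹' {x}).Finite) {s : X → X}
    (hs : ∀ y, r (s y) = y) (x : X) (m : ℕ) (F : (ℕ → X) → ℝ) :
    ∑ σ ∈ (prefs_finite hr_fin hs x (m + 1)).toFinset, F σ
      = ∑ τ ∈ (prefs_finite hr_fin hs x m).toFinset,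
          ∑ y ∈ (hr_fin (r (τ m))).toFinset,
            F (extP s x (Function.update τ m y) (m + 1)) := by
  rw [Finset.sum_sigma' (prefs_finite hr_fin hs x m).toFinset
    (fun τ => (hr_fin (r (τ m))).toFinset)
    (fun τ y => F (extP s x (Function.update τ m y) (m + 1)))]
  refine Finset.sum_nbij' (fun σ => ⟨extP s x σ m, σ m⟩)
    (fun p => extP s x (Function.update p.1 m p.2) (m + 1)) ?_ ?_ ?_ ?_ ?_
  · intro σ hσ
    rw [Set.Finite.mem_toFinset] at hσ
    obtain ⟨h1, h2, _⟩ := repr_aux hs (prefs_isPath hs hσ) m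
    simp only [Finset.mem_sigma, Set.Finite.mem_toFinset]
    exact ⟨h1, h2⟩
  · intro p hp
    simp only [Finset.mem_sigma, Set.Finite.mem_toFinset] at hp
    rw [Set.Finite.mem_toFinset]
    exact (repr_ext hs hp.1 hp.2).1
  · intro σ hσ
    rw [Set.Finite.mem_toFinset] at hσ
    obtain ⟨_, _, h3⟩ := repr_aux hs (prefs_isPath hs hσ) m
    show extP s x (Function.update (extP s x σ m) m (σ m)) (m + 1) = σ
    rw [h3, prefs_extP hσ]
  · intro p hp
    simp only [Finset.mem_sigma, Set.Finite.mem_toFinset] at hp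
    obtain ⟨h1, h2, h3⟩ := repr_ext hs hp.1 hp.2
    have e1 : extP s x (extP s x (Function.update p.1 m p.2) (m + 1)) m = p.1 := by
      rw [extP_congr (z := extP s x (Function.update p.1 m p.2) (m + 1)) (w := p.1)
        (fun i hi => h2 i hi), prefs_extP hp.1]
    show (⟨extP s x (extP s x (Function.update p.fst m p.snd) (m + 1)) m,
        extP s x (Function.update p.fst m p.snd) (m + 1) m⟩ : (_ : ℕ → X) × X) = p
    rw [e1, h3]
  · intro σ hσ
    rw [Set.Finite.mem_toFinset] at hσ
    obtain ⟨_, _, h3⟩ := repr_aux hs (prefs_isPath hs hσ) m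
    show F σ = F (extP s x (Function.update (extP s x σ m) m (σ m)) (m + 1))
    rw [h3, prefs_extP hσ]

lemma prefs_zero_eq {r : X → X} {s : X → X} (hs : ∀ y, r (s y) = y) (x : X) :
    prefs r s x 0 = {extP s x (fun _ => x) 0} := by
  apply Set.eq_singleton_iff_unique_mem.mpr
  constructor
  · refine ⟨extP s x (fun _ => x) 0, extP_isPath s hs x _ 0 (by omega) (by omega), ?_⟩
    exact extP_congr (fun i hi => absurd hi (by omega))
  · rintro σ ⟨z, _, rfl⟩
    exact extP_congr (fun i hi => absurd hi (by omega))

lemma measurableSet_pathCylinder {X : Type*} [MetricSpace X] [CompactSpace X]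
    [MeasurableSpace X] [BorelSpace X] {r : X → X} (hr : Continuous r) (x : X) (z : ℕ → X)
    (n : ℕ) : MeasurableSet (pathCylinder r x z n) := by
  have hrm : Measurable r := hr.measurable
  have h1 : MeasurableSet {w : ℕ → X | IsPathFrom r x w} := by
    have he : {w : ℕ → X | IsPathFrom r x w}
        = ((fun w : ℕ → X => r (w 0)) ⁻¹' {x}) ∩ ⋂ k, {w : ℕ → X | r (w (k + 1)) = w k} := by
      ext w
      simp [IsPathFrom, Set.mem_iInter]
    rw [he]
    refine MeasurableSet.inter ((hrm.comp (measurable_pi_apply 0)) (measurableSet_singleton x))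
      (MeasurableSet.iInter fun k => ?_)
    have hd : {w : ℕ → X | r (w (k + 1)) = w k}
        = (fun w : ℕ → X => (r (w (k + 1)), w k)) ⁻¹' {p : X × X | p.1 = p.2} := rfl
    rw [hd]
    exact ((hrm.comp (measurable_pi_apply (k + 1))).prodMk (measurable_pi_apply k))
      (isClosed_eq continuous_fst continuous_snd).measurableSet
  have h2 : pathCylinder r x z n
      = {w : ℕ → X | IsPathFrom r x w} ∩ ⋂ i, ⋂ (_ : i < n), (fun w : ℕ → X => w i) ⁻¹' {z i} := by
    ext w
    simp [pathCylinder, Set.mem_iInter]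
  rw [h2]
  exact h1.inter (MeasurableSet.iInter fun i => MeasurableSet.iInter fun _ =>
    (measurable_pi_apply i) (measurableSet_singleton (z i)))

end Aux
theorem stmt1
    {X : Type*} [MetricSpace X] [CompactSpace X] [MeasurableSpace X] [BorelSpace X]
    (r : X → X) (hr_cont : Continuous r) (hr_surj : Function.Surjective r)
    (hr_fin : ∀ x : X, (r ⁻¹' {x}).Finite)
    (W : X → ℝ) (hW_meas : Measurable W) (hW_nonneg : ∀ x, 0 ≤ W x)
    (hW1 : ∀ x : X, (∑ᶠ y ∈ r ⁻¹' {x}, W y) = 1)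
    -- the family of Kolmogorov path-space measures `P_x`
    (P : X → Measure (ℕ → X)) (hP_prob : ∀ x, IsProbabilityMeasure (P x))
    (hP_cyl : ∀ (x : X) (z : ℕ → X) (n : ℕ), IsPathFrom r x z →
      P x (pathCylinder r x z n) = ∏ i ∈ Finset.range n, ENNReal.ofReal (W (z i)))
    -- `h` is a bounded measurable harmonic function
    (h : X → ℝ) (hh_meas : Measurable h) (hh_bdd : ∃ M : ℝ, ∀ x, |h x| ≤ M)
    (hh_harm : ∀ x, RuelleOp r W h x = h x) :
    ∃ V : (ℕ → X) → ℝ, Measurable V ∧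
      -- the limit `V(z) = lim_n h(z_n)` exists `P_x`-a.e. and defines `V`
      (∀ x : X, ∀ᵐ z ∂(P x), Tendsto (fun n => h (z n)) atTop (𝓝 (V z))) ∧
      -- `V` is a cocycle
      (∀ z : ℕ → X, (∀ n, r (z (n + 1)) = z n) → V z = V (fun n => z (n + 1))) ∧
      -- and `h` is recovered from `V` by integration
      (∀ x : X, h x = ∫ z, V z ∂(P x)) := by
  rcases isEmpty_or_nonempty X with hX | hX
  · exact ⟨fun _ => 0, measurable_const, fun x => (IsEmpty.false x).elim,
      fun z _ => ((IsEmpty.false (z 0)).elim), fun x => (IsEmpty.false x).elim⟩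
  classical
  obtain ⟨M, hM⟩ := hh_bdd
  set s : X → X := Function.surjInv hr_surj with hs_def
  have hs : ∀ y, r (s y) = y := fun y => Function.surjInv_eq hr_surj y
  have hWF : ∀ y : X, ∑ u ∈ (hr_fin y).toFinset, W u = 1 := by
    intro y
    rw [← finsum_mem_eq_finite_toFinset_sum W (hr_fin y)]
    exact hW1 y
  have hhF : ∀ y : X, ∑ u ∈ (hr_fin y).toFinset, W u * h u = h y := by
    intro y
    rw [← finsum_mem_eq_finite_toFinset_sum _ (hr_fin y)]
    exact hh_harm y
  -- the core facts, proved for each fixed `x` via martingale theory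
  have core : ∀ x : X,
      (∀ᵐ z ∂P x, ∃ c : ℝ, Tendsto (fun n => h (z n)) atTop (𝓝 c)) ∧
      (∀ n : ℕ, ∫ z, h (z n) ∂P x = h x) := by
    intro x
    haveI := hP_prob x
    set Ω : Set (ℕ → X) := {z | IsPathFrom r x z} with hΩdef
    have hbp : IsPathFrom r x (extP s x (fun _ => x) 0) :=
      extP_isPath s hs x _ 0 (by omega) (fun i hi => absurd hi (by omega))
    have hΩeq : pathCylinder r x (extP s x (fun _ => x) 0) 0 = Ω := by
      ext w; simp [pathCylinder, hΩdef]
    have hΩmeas : MeasurableSet Ω := hΩeq ▸ measurableSet_pathCylinder hr_cont x _ 0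
    have hΩ1 : P x Ω = 1 := by
      rw [← hΩeq, hP_cyl x _ 0 hbp]; simp
    have hae : ∀ᵐ z ∂P x, IsPathFrom r x z := by
      have hc : P x Ωᶜ = 0 := by
        rw [measure_compl hΩmeas (measure_ne_top _ _), hΩ1, measure_univ]; simp
      have hsets : {z : ℕ → X | ¬ IsPathFrom r x z} = Ωᶜ := by
        ext z; simp [hΩdef]
      rw [ae_iff, hsets]
      exact hc
    set pf : ℕ → Finset (ℕ → X) := fun m => (prefs_finite hr_fin hs x m).toFinset with hpf
    have hpfmem : ∀ (m : ℕ) (σ : ℕ → X), σ ∈ pf m ↔ σ ∈ prefs r s x m :=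
      fun m σ => Set.Finite.mem_toFinset _
    have hpfPath : ∀ m : ℕ, ∀ σ ∈ pf m, IsPathFrom r x σ :=
      fun m σ hσ => prefs_isPath hs ((hpfmem m σ).mp hσ)
    have hcylmeas : ∀ (σ : ℕ → X) (m : ℕ), MeasurableSet (pathCylinder r x σ m) :=
      fun σ m => measurableSet_pathCylinder hr_cont x σ m
    -- master integration formula
    have master : ∀ (m : ℕ) (g : (ℕ → X) → ℝ),
        (∀ z w : ℕ → X, (∀ i < m, z i = w i) → g z = g w) →
        ∫ z, g z ∂P x = ∑ σ ∈ pf m, (∏ i ∈ Finset.range m, W (σ i)) * g σ := by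
      intro m g hg
      have hrepr : ∀ᵐ z ∂P x, g z
          = ∑ σ ∈ pf m, (pathCylinder r x σ m).indicator (fun _ => g σ) z := by
        filter_upwards [hae] with z hz
        have hmem : extP s x z m ∈ pf m := (hpfmem m (extP s x z m)).mpr (Set.mem_image_of_mem _ hz)
        have hzin : z ∈ pathCylinder r x (extP s x z m) m :=
          ⟨hz, fun i hi => (extP_lt s x z m hi).symm⟩
        rw [Finset.sum_eq_single_of_mem (extP s x z m) hmem ?_]
        · rw [Set.indicator_of_mem hzin]
          exact hg z _ (fun i hi => (extP_lt s x z m hi).symm)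
        · intro σ hσ hne
          apply Set.indicator_of_notMem
          intro hzin
          apply hne
          apply prefs_eq_of_agree ((hpfmem m σ).mp hσ) ((hpfmem m _).mp hmem)
          intro i hi
          rw [← hzin.2 i hi, extP_lt s x z m hi]
      rw [integral_congr_ae hrepr, integral_finset_sum _
        (fun σ _ => (integrable_const (g σ)).indicator (hcylmeas σ m))]
      refine Finset.sum_congr rfl (fun σ hσ => ?_)
      rw [integral_indicator_const (g σ) (hcylmeas σ m), measureReal_def, hP_cyl x σ m (hpfPath m σ hσ),
        smul_eq_mul]
      congr 1
      rw [ENNReal.toReal_prod]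
      exact Finset.prod_congr rfl (fun i _ => ENNReal.toReal_ofReal (hW_nonneg _))
    have split : ∀ (m : ℕ) (F : (ℕ → X) → ℝ),
        ∑ σ ∈ pf (m + 1), F σ = ∑ τ ∈ pf m, ∑ y ∈ (hr_fin (r (τ m))).toFinset,
          F (extP s x (Function.update τ m y) (m + 1)) :=
      fun m F => sum_prefs_succ hr_fin hs x m F
    -- expectation of the process
    have expB : ∀ n : ℕ, ∑ σ ∈ pf (n + 1),
        (∏ i ∈ Finset.range (n + 1), W (σ i)) * h (σ n) = h x := by
      intro n
      induction n with
      | zero =>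
        rw [split 0 _]
        have hpf0 : pf 0 = {extP s x (fun _ => x) 0} := by
          apply Finset.ext
          intro σ
          rw [Finset.mem_singleton, hpfmem 0 σ, prefs_zero_eq hs x]
          exact Set.mem_singleton_iff
        rw [hpf0, Finset.sum_singleton]
        have hre : r (extP s x (fun _ => x) 0 0) = x := hbp.1
        rw [hre]
        have hterm : ∀ y : X,
            (∏ i ∈ Finset.range (0 + 1),
              W (extP s x (Function.update (extP s x (fun _ => x) 0) 0 y) (0 + 1) i))
              * h (extP s x (Function.update (extP s x (fun _ => x) 0) 0 y) (0 + 1) 0)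
            = W y * h y := by
          intro y
          have hw0 : extP s x (Function.update (extP s x (fun _ => x) 0) 0 y) (0 + 1) 0 = y := by
            rw [extP_lt s x _ (0 + 1) (by omega), Function.update_self]
          rw [Finset.prod_range_one, hw0]
        rw [Finset.sum_congr rfl (fun y _ => hterm y)]
        exact hhF x
      | succ n IH =>
        rw [split (n + 1) _]
        have hstep : ∀ τ ∈ pf (n + 1),
            (∑ y ∈ (hr_fin (r (τ (n + 1)))).toFinset,
              (∏ i ∈ Finset.range (n + 1 + 1),
                W (extP s x (Function.update τ (n + 1) y) (n + 1 + 1) i))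
                * h (extP s x (Function.update τ (n + 1) y) (n + 1 + 1) (n + 1)))
            = (∏ i ∈ Finset.range (n + 1), W (τ i)) * h (τ n) := by
          intro τ hτ
          have hτp := hpfPath (n + 1) τ hτ
          have hrτ : r (τ (n + 1)) = τ n := hτp.2 n
          have hwlt : ∀ (y : X), ∀ i < n + 1,
              extP s x (Function.update τ (n + 1) y) (n + 1 + 1) i = τ i := by
            intro y i hi
            rw [extP_lt s x _ (n + 1 + 1) (by omega), Function.update_of_ne (by omega)]
          have hwend : ∀ y : X,
              extP s x (Function.update τ (n + 1) y) (n + 1 + 1) (n + 1) = y := by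
            intro y
            rw [extP_lt s x _ (n + 1 + 1) (by omega), Function.update_self]
          have hterm : ∀ y : X,
              (∏ i ∈ Finset.range (n + 1 + 1),
                W (extP s x (Function.update τ (n + 1) y) (n + 1 + 1) i))
                * h (extP s x (Function.update τ (n + 1) y) (n + 1 + 1) (n + 1))
              = (∏ i ∈ Finset.range (n + 1), W (τ i)) * (W y * h y) := by
            intro y
            have hp : (∏ i ∈ Finset.range (n + 1),
                W (extP s x (Function.update τ (n + 1) y) (n + 1 + 1) i))
                = ∏ i ∈ Finset.range (n + 1), W (τ i) :=
              Finset.prod_congr rfl (fun i hi => by rw [hwlt y i (Finset.mem_range.mp hi)])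
            rw [Finset.prod_range_succ, hwend y, hp]
            ring
          rw [hrτ, Finset.sum_congr rfl (fun y _ => hterm y), ← Finset.mul_sum, hhF (τ n)]
        exact (Finset.sum_congr rfl hstep).trans IH
    have exp : ∀ n : ℕ, ∫ z, h (z n) ∂P x = h x := by
      intro n
      rw [master (n + 1) (fun z => h (z n))
        (fun z w hzw => by show h (z n) = h (w n); rw [hzw n (by omega)])]
      exact expB n
    -- the filtration of coordinates `z 0, …, z n`
    have hπmeas : ∀ n : ℕ, Measurable (fun (z : ℕ → X) (i : Fin (n + 1)) => z i) :=
      fun n => measurable_pi_lambda _ (fun i => measurable_pi_apply _)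
    set ℱ : Filtration ℕ (inferInstance : MeasurableSpace (ℕ → X)) :=
      { seq := fun n => MeasurableSpace.comap (fun (z : ℕ → X) (i : Fin (n + 1)) => z i)
          MeasurableSpace.pi
        mono' := by
          intro n m hnm
          show MeasurableSpace.comap (fun (z : ℕ → X) (i : Fin (n + 1)) => z i)
              MeasurableSpace.pi
            ≤ MeasurableSpace.comap (fun (z : ℕ → X) (i : Fin (m + 1)) => z i)
              MeasurableSpace.pi
          have hco : (fun (z : ℕ → X) (i : Fin (n + 1)) => z i)
              = (fun (v : Fin (m + 1) → X) (i : Fin (n + 1)) => v (Fin.castLE (by omega) i))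
                ∘ (fun (z : ℕ → X) (i : Fin (m + 1)) => z i) := rfl
          rw [hco, ← MeasurableSpace.comap_comp]
          exact MeasurableSpace.comap_mono
            ((measurable_pi_lambda _ (fun i => measurable_pi_apply _)).comap_le)
        le' := fun n => (hπmeas n).comap_le } with hℱ
    have hπℱ : ∀ n : ℕ, Measurable[ℱ n] (fun (z : ℕ → X) (i : Fin (n + 1)) => z i) :=
      fun n => Measurable.of_comap_le le_rfl
    have hadp : ∀ n : ℕ, StronglyMeasurable[ℱ n] (fun z : ℕ → X => h (z n)) := by
      intro n
      have h1 : Measurable[ℱ n] (fun z : ℕ → X => z n) :=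
        (measurable_pi_apply (⟨n, Nat.lt_succ_self n⟩ : Fin (n + 1))).comp (hπℱ n)
      exact (hh_meas.comp h1).stronglyMeasurable
    have hMint : ∀ n : ℕ, Integrable (fun z : ℕ → X => h (z n)) (P x) :=
      fun n => (integrable_const M).mono'
        (hh_meas.comp (measurable_pi_apply n)).aestronglyMeasurable
        (Eventually.of_forall fun z => by simpa using hM (z n))
    -- one-step martingale property
    have key : ∀ (n : ℕ) (A : Set (ℕ → X)), MeasurableSet[ℱ n] A →
        ∫ z in A, h (z (n + 1)) ∂P x = ∫ z in A, h (z n) ∂P x := by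
      intro n A hA
      obtain ⟨B, hB, rfl⟩ := hA
      set π : (ℕ → X) → (Fin (n + 1) → X) := fun z i => z i with hπdef
      have hAm : MeasurableSet (π ⁻¹' B) := hπmeas n hB
      rw [← integral_indicator hAm, ← integral_indicator hAm]
      have hdep : ∀ m ≤ n + 1, ∀ z w : ℕ → X, (∀ i < n + 2, z i = w i) →
          (π ⁻¹' B).indicator (fun u => h (u m)) z
            = (π ⁻¹' B).indicator (fun u => h (u m)) w := by
        intro m hm z w hzw
        have hπeq : π z = π w := funext fun i => hzw i (Nat.lt_succ_of_lt i.isLt)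
        rw [Set.indicator_apply, Set.indicator_apply]
        simp only [Set.mem_preimage]
        rw [hπeq, hzw m (by omega)]
      rw [master (n + 2) _ (hdep (n + 1) (le_refl _)), master (n + 2) _ (hdep n (by omega))]
      rw [split (n + 1) _, split (n + 1) _]
      refine Finset.sum_congr rfl (fun τ hτ => ?_)
      have hτp := hpfPath (n + 1) τ hτ
      have hrτ : r (τ (n + 1)) = τ n := hτp.2 n
      have hwlt : ∀ (y : X), ∀ i < n + 1,
          extP s x (Function.update τ (n + 1) y) (n + 1 + 1) i = τ i := by
        intro y i hi
        rw [extP_lt s x _ (n + 1 + 1) (by omega), Function.update_of_ne (by omega)]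
      have hwend : ∀ y : X,
          extP s x (Function.update τ (n + 1) y) (n + 1 + 1) (n + 1) = y := by
        intro y
        rw [extP_lt s x _ (n + 1 + 1) (by omega), Function.update_self]
      have hπw : ∀ y : X, π (extP s x (Function.update τ (n + 1) y) (n + 1 + 1)) = π τ :=
        fun y => funext fun i => hwlt y i i.isLt
      have hprod : ∀ y : X, (∏ i ∈ Finset.range (n + 2),
          W (extP s x (Function.update τ (n + 1) y) (n + 1 + 1) i))
          = (∏ i ∈ Finset.range (n + 1), W (τ i)) * W y := by
        intro y
        rw [Finset.prod_range_succ, hwend y]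
        congr 1
        exact Finset.prod_congr rfl (fun i hi => by rw [hwlt y i (Finset.mem_range.mp hi)])
      by_cases hτB : π τ ∈ B
      · have hind : ∀ (y : X) (m : ℕ),
            (π ⁻¹' B).indicator (fun u => h (u m))
              (extP s x (Function.update τ (n + 1) y) (n + 1 + 1))
            = h (extP s x (Function.update τ (n + 1) y) (n + 1 + 1) m) := by
          intro y m
          exact Set.indicator_of_mem (by rw [Set.mem_preimage, hπw y]; exact hτB) _
        calc ∑ y ∈ (hr_fin (r (τ (n + 1)))).toFinset,
              (∏ i ∈ Finset.range (n + 2),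
                W (extP s x (Function.update τ (n + 1) y) (n + 1 + 1) i))
                * (π ⁻¹' B).indicator (fun u => h (u (n + 1)))
                    (extP s x (Function.update τ (n + 1) y) (n + 1 + 1))
            = ∑ y ∈ (hr_fin (τ n)).toFinset,
                ((∏ i ∈ Finset.range (n + 1), W (τ i)) * (W y * h y)) := by
              rw [hrτ]
              refine Finset.sum_congr rfl (fun y _ => ?_)
              rw [hind y (n + 1), hwend y, hprod y]
              ring
          _ = (∏ i ∈ Finset.range (n + 1), W (τ i)) * h (τ n) := by
              rw [← Finset.mul_sum, hhF (τ n)]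
          _ = ∑ y ∈ (hr_fin (τ n)).toFinset,
                ((∏ i ∈ Finset.range (n + 1), W (τ i)) * h (τ n) * W y) := by
              rw [← Finset.mul_sum, hWF (τ n), mul_one]
          _ = ∑ y ∈ (hr_fin (r (τ (n + 1)))).toFinset,
              (∏ i ∈ Finset.range (n + 2),
                W (extP s x (Function.update τ (n + 1) y) (n + 1 + 1) i))
                * (π ⁻¹' B).indicator (fun u => h (u n))
                    (extP s x (Function.update τ (n + 1) y) (n + 1 + 1)) := by
              rw [hrτ]
              refine Finset.sum_congr rfl (fun y _ => ?_)
              rw [hind y n, hwlt y n (by omega), hprod y]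
              ring
      · have hind : ∀ (y : X) (m : ℕ),
            (π ⁻¹' B).indicator (fun u => h (u m))
              (extP s x (Function.update τ (n + 1) y) (n + 1 + 1))
            = 0 := by
          intro y m
          exact Set.indicator_of_notMem (by rw [Set.mem_preimage, hπw y]; exact hτB) _
        refine Finset.sum_congr rfl (fun y _ => ?_)
        rw [hind y (n + 1), hind y n]
    -- chain the one-step property
    have chain : ∀ (i j : ℕ), i ≤ j → ∀ A : Set (ℕ → X), MeasurableSet[ℱ i] A →
        ∫ z in A, h (z j) ∂P x = ∫ z in A, h (z i) ∂P x := by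
      intro i j hij
      induction j, hij using Nat.le_induction with
      | base => intro A _; rfl
      | succ j hij IH =>
        intro A hA
        rw [key j A (ℱ.mono hij A hA)]
        exact IH A hA
    have hmart : Martingale (fun (n : ℕ) (z : ℕ → X) => h (z n)) ℱ (P x) := by
      constructor
      · exact hadp
      · intro i j hij
        haveI : SigmaFinite ((P x).trim (ℱ.le i)) := by infer_instance
        exact (ae_eq_condExp_of_forall_setIntegral_eq (ℱ.le i) (hMint j)
          (fun A _ _ => (hMint i).integrableOn)
          (fun A hA _ => (chain i j hij A hA).symm)
          ((hadp i).aestronglyMeasurable)).symm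
    have hbddL : ∀ n : ℕ, eLpNorm (fun z : ℕ → X => h (z n)) 1 (P x) ≤ (M.toNNReal : ENNReal) := by
      intro n
      refine le_trans (eLpNorm_le_of_ae_bound (C := M)
        (Eventually.of_forall fun z => by simpa using hM (z n))) ?_
      rw [measure_univ]
      simp [ENNReal.ofReal]
    exact ⟨hmart.submartingale.exists_ae_tendsto_of_bdd hbddL, exp⟩
  -- define V as (the real part of) the liminf
  set V : (ℕ → X) → ℝ := fun z => (liminf (fun n => ((h (z n) : ℝ) : EReal)) atTop).toReal
    with hV
  have hVmeas : Measurable V :=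
    (Measurable.liminf (fun n =>
      measurable_coe_real_ereal.comp (hh_meas.comp (measurable_pi_apply n)))).ereal_toReal
  have hVtend : ∀ x : X, ∀ᵐ z ∂P x, Tendsto (fun n => h (z n)) atTop (𝓝 (V z)) := by
    intro x
    filter_upwards [(core x).1] with z hz
    obtain ⟨c, hc⟩ := hz
    have h1 : Tendsto (fun n => ((h (z n) : ℝ) : EReal)) atTop (𝓝 ((c : ℝ) : EReal)) :=
      (continuous_coe_real_ereal.tendsto c).comp hc
    have h2 : V z = c := by
      rw [hV]
      simp only
      rw [h1.liminf_eq]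
      exact EReal.toReal_coe c
    rw [h2]
    exact hc
  refine ⟨V, hVmeas, hVtend, ?_, ?_⟩
  · intro z _
    show (liminf (fun n => ((h (z n) : ℝ) : EReal)) atTop).toReal
        = (liminf (fun n => ((h (z (n + 1)) : ℝ) : EReal)) atTop).toReal
    rw [← liminf_nat_add (fun n => ((h (z n) : ℝ) : EReal)) 1]
  · intro x
    haveI := hP_prob x
    have hint : ∀ n : ℕ, AEStronglyMeasurable (fun z : ℕ → X => h (z n)) (P x) :=
      fun n => (hh_meas.comp (measurable_pi_apply n)).aestronglyMeasurable
    have hT := tendsto_integral_of_dominated_convergence (μ := P x)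
      (F := fun n (z : ℕ → X) => h (z n)) (f := V) (fun _ => M) hint
      (integrable_const M) (fun n => Eventually.of_forall (fun z => by simpa using hM (z n)))
      (hVtend x)
    have h2 : Tendsto (fun n : ℕ => ∫ z, h (z n) ∂P x) atTop (𝓝 (h x)) := by
      simp only [(core x).2]
      exact tendsto_const_nhds
    exact (tendsto_nhds_unique hT h2).symm
end

section
/- Let X be a compact metric space, r : X → X continuous, surjective, finite-to-one, and W a continuous nonnegative function with R_W 1 = 1. If ν is an extreme point of the set of R_W-invariant Borel probability measures (equivalently, an ergodic invariant measure), and h ∈ C(X) satisfies R_W h = h, then h is constant ν-almost everywhere, equal to ν(h). -/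
open MeasureTheory Filter Topology
open scoped NNReal ENNReal

/-- The set of `R_W`-invariant Borel probability measures. -/
def MinvSet {X : Type*} [MetricSpace X] [MeasurableSpace X]
    (r : X → X) (W : X → ℝ) : Set (Measure X) :=
  {ν | IsProbabilityMeasure ν ∧ ∀ f : X → ℝ, Continuous f →
    (∫ x, RuelleOp r W f x ∂ν) = ∫ x, f x ∂ν}

lemma ruelle_sum {X : Type*} {r : X → X} (hr_fin : ∀ x : X, (r ⁻¹' {x}).Finite)
    (W f : X → ℝ) (x : X) :
    RuelleOp r W f x = ∑ y ∈ (hr_fin x).toFinset, W y * f y :=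
  finsum_mem_eq_finite_toFinset_sum _ (hr_fin x)

lemma ruelle_mul_comp {X : Type*} {r : X → X} (hr_fin : ∀ x : X, (r ⁻¹' {x}).Finite)
    (W f g : X → ℝ) (x : X) :
    RuelleOp r W (fun y => f y * g (r y)) x = g x * RuelleOp r W f x := by
  rw [ruelle_sum hr_fin, ruelle_sum hr_fin, Finset.mul_sum]
  refine Finset.sum_congr rfl fun y hy => ?_
  have hx : r y = x := by simpa using (Set.Finite.mem_toFinset _).mp hy
  rw [hx]; ring

lemma ruelle_comp {X : Type*} {r : X → X} (hr_fin : ∀ x : X, (r ⁻¹' {x}).Finite)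
    {W : X → ℝ} (hW1 : ∀ x : X, (∑ᶠ y ∈ r ⁻¹' {x}, W y) = 1) (g : X → ℝ) (x : X) :
    RuelleOp r W (fun y => g (r y)) x = g x := by
  have h1 : RuelleOp r W (fun _ => (1:ℝ)) x = 1 := by
    rw [ruelle_sum hr_fin]
    simpa [← finsum_mem_eq_finite_toFinset_sum W (hr_fin x)] using hW1 x
  have := ruelle_mul_comp hr_fin W (fun _ => (1:ℝ)) g x
  simpa [h1] using this

theorem stmt9
    {X : Type*} [MetricSpace X] [CompactSpace X] [MeasurableSpace X] [BorelSpace X]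
    (r : X → X) (hr_cont : Continuous r) (hr_surj : Function.Surjective r)
    (hr_fin : ∀ x : X, (r ⁻¹' {x}).Finite)
    (W : X → ℝ) (hW_cont : Continuous W) (hW_nonneg : ∀ x, 0 ≤ W x)
    (hW1 : ∀ x : X, (∑ᶠ y ∈ r ⁻¹' {x}, W y) = 1)
    -- `ν` is an extreme point of the set of `R_W`-invariant probability measures
    (ν : Measure X) (hν : ν ∈ MinvSet r W)
    (hν_extreme : ∀ ν₁ ∈ MinvSet r W, ∀ ν₂ ∈ MinvSet r W, ∀ a b : NNReal,
      0 < a → 0 < b → a + b = 1 → ν = a • ν₁ + b • ν₂ → ν₁ = ν₂)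
    (h : X → ℝ) (hh_cont : Continuous h) (hh_harm : ∀ x, RuelleOp r W h x = h x) :
    ∀ᵐ x ∂ν, h x = ∫ y, h y ∂ν := by
  haveI hprob : IsProbabilityMeasure ν := hν.1
  have hinv := hν.2
  have integ : ∀ f : X → ℝ, Continuous f → Integrable f ν := fun f hf =>
    integrableOn_univ.mp (hf.locallyIntegrable.integrableOn_isCompact isCompact_univ)
  set m : ℝ := ∫ y, h y ∂ν with hm
  -- Step 1: `h ∘ r = h` almost everywhere
  have e1 : ∫ x, (h (r x))^2 ∂ν = ∫ x, (h x)^2 ∂ν := by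
    have h2 := hinv (fun y => (h (r y))^2) ((hh_cont.comp hr_cont).pow 2)
    calc ∫ x, (h (r x))^2 ∂ν
        = ∫ x, RuelleOp r W (fun y => (h (r y))^2) x ∂ν := h2.symm
      _ = ∫ x, (h x)^2 ∂ν :=
          integral_congr_ae (ae_of_all _ fun x =>
            ruelle_comp hr_fin hW1 (fun z => (h z)^2) x)
  have e2 : ∫ x, h x * h (r x) ∂ν = ∫ x, (h x)^2 ∂ν := by
    have h2 := hinv (fun y => h y * h (r y)) (hh_cont.mul (hh_cont.comp hr_cont))
    rw [← h2]
    refine integral_congr_ae (ae_of_all _ fun x => ?_)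
    rw [ruelle_mul_comp hr_fin W h h x, hh_harm x]; ring
  have i1 : Integrable (fun x => (h (r x))^2) ν := integ _ ((hh_cont.comp hr_cont).pow 2)
  have i2 : Integrable (fun x => h x * h (r x)) ν := integ _ (hh_cont.mul (hh_cont.comp hr_cont))
  have i3 : Integrable (fun x => (h x)^2) ν := integ _ (hh_cont.pow 2)
  have hsq0 : ∫ x, (h (r x) - h x)^2 ∂ν = 0 := by
    have expand : ∀ x : X, (h (r x) - h x)^2
        = (h (r x))^2 - 2*(h x * h (r x)) + (h x)^2 := fun x => by ring
    calc ∫ x, (h (r x) - h x)^2 ∂ν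
        = ∫ x, ((h (r x))^2 - 2*(h x * h (r x)) + (h x)^2) ∂ν :=
          integral_congr_ae (ae_of_all _ expand)
      _ = (∫ x, ((h (r x))^2 - 2*(h x * h (r x))) ∂ν) + ∫ x, (h x)^2 ∂ν :=
          integral_add (i1.sub (i2.const_mul 2)) i3
      _ = ((∫ x, (h (r x))^2 ∂ν) - ∫ x, 2*(h x * h (r x)) ∂ν) + ∫ x, (h x)^2 ∂ν := by
          rw [integral_sub i1 (i2.const_mul 2)]
      _ = 0 := by rw [integral_const_mul, e1, e2]; ring
  have hae : ∀ᵐ x ∂ν, h (r x) = h x := by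
    have hnn : 0 ≤ fun x : X => (h (r x) - h x)^2 := fun x => sq_nonneg _
    have h0 := (integral_eq_zero_iff_of_nonneg hnn
      (integ _ (((hh_cont.comp hr_cont).sub hh_cont).pow 2))).mp hsq0
    filter_upwards [h0] with x hx
    have hx' : (h (r x) - h x)^2 = 0 := hx
    have := sq_eq_zero_iff.mp hx'
    linarith
  -- bounds
  have hne : Nonempty X := by
    by_contra hemp
    have huniv : (Set.univ : Set X) = ∅ := by
      ext x; exact absurd ⟨x⟩ hemp
    have h1 : ν Set.univ = 1 := measure_univ
    rw [huniv] at h1; simp at h1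
  obtain ⟨x₀, -, hx₀'⟩ := isCompact_univ.exists_isMaxOn (Set.univ_nonempty)
    (hh_cont.abs.continuousOn (s := Set.univ))
  set C : ℝ := |h x₀| with hCdef
  have hx₀ : ∀ x : X, |h x| ≤ C := fun x => hx₀' (Set.mem_univ x)
  have hC0 : 0 ≤ C := abs_nonneg _
  set c : ℝ := C + 1 with hc
  have hc1 : 1 ≤ c := by simp [hc]; linarith
  have hmC : |m| ≤ C := by
    calc |m| ≤ ∫ x, |h x| ∂ν := by
          simpa [Real.norm_eq_abs] using norm_integral_le_integral_norm (μ := ν) h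
      _ ≤ ∫ _x, C ∂ν := integral_mono (integ _ hh_cont.abs) (integrable_const C) hx₀
      _ = C := by simp
  -- the two measures
  have gen : ∀ ε : ℝ, |ε| = 1 →
      ((ENNReal.ofReal (c + ε * m))⁻¹ •
          ν.withDensity (fun x => ENNReal.ofReal (c + ε * h x))) ∈ MinvSet r W ∧
      ∀ g : X → ℝ, (∫ x, g x ∂((ENNReal.ofReal (c + ε * m))⁻¹ •
            ν.withDensity (fun x => ENNReal.ofReal (c + ε * h x))))
        = (c + ε*m)⁻¹ * ∫ x, (c + ε * h x) * g x ∂ν := by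
    intro ε hε
    have hφ : ∀ x, 1 ≤ c + ε * h x := fun x => by
      have h1 : |ε * h x| ≤ C := by rw [abs_mul, hε, one_mul]; exact hx₀ x
      have := (abs_le.mp h1).1; simp only [hc]; linarith
    have hεm : 1 ≤ c + ε * m := by
      have h1 : |ε * m| ≤ C := by rw [abs_mul, hε, one_mul]; exact hmC
      have := (abs_le.mp h1).1; simp only [hc]; linarith
    have hφc : Continuous (fun x => c + ε * h x) := by fun_prop
    have hdm : Measurable (fun x => Real.toNNReal (c + ε * h x)) :=
      (continuous_real_toNNReal.comp hφc).measurable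
    have hwd : (fun x => ENNReal.ofReal (c + ε * h x))
        = fun x => ((Real.toNNReal (c + ε * h x) : ℝ≥0) : ℝ≥0∞) := rfl
    have intf : ∀ g : X → ℝ, (∫ x, g x ∂((ENNReal.ofReal (c + ε * m))⁻¹ •
            ν.withDensity (fun x => ENNReal.ofReal (c + ε * h x))))
        = (c + ε*m)⁻¹ * ∫ x, (c + ε * h x) * g x ∂ν := by
      intro g
      rw [integral_smul_measure, hwd, integral_withDensity_eq_integral_smul hdm]
      have hptw : ∀ x, (Real.toNNReal (c + ε * h x)) • g x = (c + ε * h x) * g x := fun x => by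
        rw [NNReal.smul_def, Real.coe_toNNReal _ (by linarith [hφ x]), smul_eq_mul]
      rw [integral_congr_ae (ae_of_all _ hptw)]
      rw [smul_eq_mul, ENNReal.toReal_inv, ENNReal.toReal_ofReal (by linarith)]
    refine ⟨⟨?_, ?_⟩, intf⟩
    · constructor
      have hmass : (ν.withDensity fun x => ENNReal.ofReal (c + ε * h x)) Set.univ
          = ENNReal.ofReal (c + ε * m) := by
        rw [withDensity_apply _ MeasurableSet.univ, setLIntegral_univ]
        rw [← ofReal_integral_eq_lintegral_ofReal (integ _ hφc)
          (ae_of_all _ fun x => by simp only [Pi.zero_apply]; linarith [hφ x])]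
        congr 1
        rw [integral_add (integrable_const c) ((integ h hh_cont).const_mul ε),
          integral_const_mul]
        simp [hm]
      rw [Measure.smul_apply, hmass, smul_eq_mul,
        ENNReal.inv_mul_cancel (ENNReal.ofReal_pos.mpr (by linarith)).ne'
          ENNReal.ofReal_ne_top]
    · intro f hf
      rw [intf, intf]
      congr 1
      have step1 : ∀ x, (c + ε * h x) * RuelleOp r W f x
          = RuelleOp r W (fun y => f y * (c + ε * h (r y))) x :=
        fun x => (ruelle_mul_comp hr_fin W f (fun z => c + ε * h z) x).symm
      calc ∫ x, (c + ε * h x) * RuelleOp r W f x ∂ν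
          = ∫ x, RuelleOp r W (fun y => f y * (c + ε * h (r y))) x ∂ν :=
            integral_congr_ae (ae_of_all _ step1)
        _ = ∫ x, f x * (c + ε * h (r x)) ∂ν := hinv _ (by fun_prop)
        _ = ∫ x, (c + ε * h x) * f x ∂ν := by
            refine integral_congr_ae ?_
            filter_upwards [hae] with x hx
            rw [hx]; ring
  obtain ⟨hmem₁, hint₁⟩ := gen 1 (by norm_num)
  obtain ⟨hmem₂, hint₂⟩ := gen (-1) (by norm_num)
  have hcm : 1 ≤ c + m := by have := (abs_le.mp hmC).1; simp only [hc]; linarith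
  have hcm' : 1 ≤ c - m := by have := (abs_le.mp hmC).2; simp only [hc]; linarith
  set ν₁ : Measure X := (ENNReal.ofReal (c + 1 * m))⁻¹ •
      ν.withDensity (fun x => ENNReal.ofReal (c + 1 * h x)) with hν₁
  set ν₂ : Measure X := (ENNReal.ofReal (c + (-1) * m))⁻¹ •
      ν.withDensity (fun x => ENNReal.ofReal (c + (-1) * h x)) with hν₂
  set a : ℝ≥0 := Real.toNNReal ((c + m)/(2*c)) with hadef
  set b : ℝ≥0 := Real.toNNReal ((c - m)/(2*c)) with hbdef
  have ha : 0 < a := Real.toNNReal_pos.mpr (by positivity)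
  have hb : 0 < b := Real.toNNReal_pos.mpr (by positivity)
  have hab : a + b = 1 := by
    rw [hadef, hbdef, ← Real.toNNReal_add (by positivity) (by positivity)]
    have : (c + m)/(2*c) + (c - m)/(2*c) = 1 := by field_simp; ring
    rw [this, Real.toNNReal_one]
  have nnsmul : ∀ (t : ℝ≥0) (μ : Measure X), t • μ = (t : ℝ≥0∞) • μ := fun t μ => by
    ext s hs; rw [Measure.smul_apply, Measure.smul_apply, ENNReal.smul_def]
  have hscal : ∀ u : ℝ, 1 ≤ u →
      (ENNReal.ofReal (u/(2*c)) : ℝ≥0∞) * (ENNReal.ofReal u)⁻¹ = (ENNReal.ofReal (2*c))⁻¹ := by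
    intro u hu
    rw [ENNReal.ofReal_div_of_pos (by positivity), div_eq_mul_inv,
      mul_right_comm, ENNReal.mul_inv_cancel (ENNReal.ofReal_pos.mpr (by linarith)).ne'
        ENNReal.ofReal_ne_top, one_mul]
  have hdecomp : ν = a • ν₁ + b • ν₂ := by
    have hm1 : Measurable (fun x => ENNReal.ofReal (c + 1 * h x)) :=
      (ENNReal.continuous_ofReal.comp (continuous_const.add (continuous_const.mul hh_cont))).measurable
    have key : a • ν₁ + b • ν₂
        = (ENNReal.ofReal (2*c))⁻¹ •
          (ν.withDensity (fun x => ENNReal.ofReal (c + 1 * h x))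
            + ν.withDensity (fun x => ENNReal.ofReal (c + (-1) * h x))) := by
      rw [hν₁, hν₂, nnsmul, nnsmul, smul_smul, smul_smul, smul_add]
      congr 1
      · have : (a : ℝ≥0∞) = ENNReal.ofReal ((c + m)/(2*c)) := rfl
        rw [this]
        have := hscal (c + m) hcm
        rw [show c + 1 * m = c + m by ring, this]
      · have : (b : ℝ≥0∞) = ENNReal.ofReal ((c - m)/(2*c)) := rfl
        rw [this]
        have := hscal (c - m) hcm'
        rw [show c + (-1) * m = c - m by ring, this]
    rw [key, ← withDensity_add_left hm1]
    have hdsum : ((fun x => ENNReal.ofReal (c + 1 * h x))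
          + fun x => ENNReal.ofReal (c + (-1) * h x))
        = fun _x => ENNReal.ofReal (2*c) := by
      funext x
      rw [Pi.add_apply, ← ENNReal.ofReal_add (by nlinarith [abs_le.mp (hx₀ x)])
        (by nlinarith [abs_le.mp (hx₀ x)])]
      congr 1; ring
    rw [hdsum, withDensity_const, smul_smul,
      ENNReal.inv_mul_cancel (ENNReal.ofReal_pos.mpr (by positivity)).ne'
        ENNReal.ofReal_ne_top, one_smul]
  have heq : ν₁ = ν₂ := hν_extreme ν₁ hmem₁ ν₂ hmem₂ a b ha hb hab hdecomp
  -- conclude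
  set s : ℝ := ∫ x, (h x)^2 ∂ν with hs
  have hival : ∀ ε : ℝ, ∫ x, (c + ε * h x) * h x ∂ν = c * m + ε * s := by
    intro ε
    have : ∀ x : X, (c + ε * h x) * h x = c * h x + ε * (h x)^2 := fun x => by ring
    rw [integral_congr_ae (ae_of_all _ this),
      integral_add ((integ h hh_cont).const_mul c) (i3.const_mul ε),
      integral_const_mul, integral_const_mul]
  have heqi : (c + 1*m)⁻¹ * (c * m + 1 * s) = (c + (-1)*m)⁻¹ * (c * m + (-1) * s) := by
    rw [← hival 1, ← hival (-1), ← hint₁ h, ← hint₂ h, heq]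
  have hsm : s = m^2 := by
    have h1 : (c + m)⁻¹ * (c*m + s) = (c - m)⁻¹ * (c*m - s) := by
      rw [show c + 1*m = c + m by ring, show c + (-1)*m = c - m by ring] at heqi
      calc (c + m)⁻¹ * (c*m + s) = (c + m)⁻¹ * (c*m + 1*s) := by ring_nf
        _ = (c - m)⁻¹ * (c*m + (-1)*s) := heqi
        _ = (c - m)⁻¹ * (c*m - s) := by ring_nf
    have h2 : (c - m) * (c*m + s) = (c + m) * (c*m - s) := by
      have hp : (0:ℝ) < c + m := by linarith
      have hq : (0:ℝ) < c - m := by linarith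
      field_simp at h1
      linarith [h1]
    have h3 : 2*c*s = 2*c*(m^2) := by nlinarith [h2]
    exact mul_left_cancel₀ (by positivity : (2*c:ℝ) ≠ 0) h3
  have hzero : ∫ x, (h x - m)^2 ∂ν = 0 := by
    have hexp : ∀ x : X, (h x - m)^2 = ((h x)^2 - 2*m*h x) + m^2 := fun x => by ring
    have ii : Integrable (fun x => (h x)^2 - 2*m*h x) ν :=
      i3.sub ((integ h hh_cont).const_mul (2*m))
    calc ∫ x, (h x - m)^2 ∂ν
        = ∫ x, (((h x)^2 - 2*m*h x) + m^2) ∂ν := integral_congr_ae (ae_of_all _ hexp)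
      _ = (∫ x, ((h x)^2 - 2*m*h x) ∂ν) + ∫ _x, m^2 ∂ν := integral_add ii (integrable_const _)
      _ = ((∫ x, (h x)^2 ∂ν) - ∫ x, 2*m*h x ∂ν) + ∫ _x, m^2 ∂ν := by
          rw [integral_sub i3 ((integ h hh_cont).const_mul (2*m))]
      _ = 0 := by
          rw [integral_const_mul, integral_const]
          simp only [measure_univ, probReal_univ, ENNReal.toReal_one, one_smul, ← hs, ← hm]
          nlinarith [hsm]
  have hfin := (integral_eq_zero_iff_of_nonneg (fun x => sq_nonneg (h x - m))
    (integ _ (by fun_prop))).mp hzero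
  filter_upwards [hfin] with x hx
  have hx' : (h x - m)^2 = 0 := hx
  have := sq_eq_zero_iff.mp hx'
  linarith
end
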